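/- Let p be a prime, let r and n be positive integers, let f be an automorphism of the abelian group (Z/(p^r))^n with f^{p^r} = id (so that powers f^μ are well defined for μ ∈ Z/(p^r)), and let Q : (Z/(p^r))^n → Z/(p^r) be a map such that Q∘f = Q and such that b(x,y) := Q(x+y) − Q(x) − Q(y) is additive in each variable. Let H be the set (Z/(p^r))^n × Z/(p^r) with componentwise addition and multiplication (x,μ)·(y,μ') = (x + f^{μ−Q(x)}(y), μ + μ' + b(x, f^{μ−Q(x)}(y))), and let H' be the set (Z/(p^r))^n × Z/(p^r) with addition (x,μ)+(y,μ') = (x+y, μ+μ'−b(x,y)) and multiplication (x,μ)·(y,μ') = (x + f^μ(y), μ+μ'). Then the map φ : H → H' defined by φ(x,μ) = (x, μ − Q(x)) is a bijection satisfying φ(u + v) = φ(u) + φ(v) and φ(u·v) = φ(u)·φ(v) for all u,v ∈ H; that is, φ is an isomorphism of left braces from H = H(p^r,n,Q,f) onto the asymmetric product H' = H'(p^r,n,−b,f). -/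

import Mathlib

/-- the map `φ(x,μ) = (x, μ − Q(x))` is an isomorphism of left braces
from `H = H(p^r,n,Q,f)` onto the asymmetric product `H' = H'(p^r,n,−b,f)`, where
`b(x,y) = Q(x+y) − Q(x) − Q(y)`. -/
theorem H_iso_asymmetric_product
    (p r n : ℕ) (hp : p.Prime) (hr : 0 < r) (hn : 0 < n)
    (f : AddAut (Fin n → ZMod (p ^ r))) (hf : (p ^ r) • f = 0)
    (Q : (Fin n → ZMod (p ^ r)) → ZMod (p ^ r))
    (hQf : ∀ x, Q (f x) = Q x)
    (hbadd : ∀ x y z : Fin n → ZMod (p ^ r),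
      (Q ((x + y) + z) - Q (x + y) - Q z) =
        (Q (x + z) - Q x - Q z) + (Q (y + z) - Q y - Q z)) :
    let b : (Fin n → ZMod (p ^ r)) → (Fin n → ZMod (p ^ r)) → ZMod (p ^ r) :=
      fun x y => Q (x + y) - Q x - Q y
    -- the left brace H(p^r,n,Q,f):
    let addH : ((Fin n → ZMod (p ^ r)) × ZMod (p ^ r)) →
        ((Fin n → ZMod (p ^ r)) × ZMod (p ^ r)) → ((Fin n → ZMod (p ^ r)) × ZMod (p ^ r)) :=
      fun u v => (u.1 + v.1, u.2 + v.2)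
    let mulH : ((Fin n → ZMod (p ^ r)) × ZMod (p ^ r)) →
        ((Fin n → ZMod (p ^ r)) × ZMod (p ^ r)) → ((Fin n → ZMod (p ^ r)) × ZMod (p ^ r)) :=
      fun u v => (u.1 + ((u.2 - Q u.1).val • f) v.1,
        u.2 + v.2 + b u.1 (((u.2 - Q u.1).val • f) v.1))
    -- the asymmetric product H'(p^r,n,−b,f):
    let addH' : ((Fin n → ZMod (p ^ r)) × ZMod (p ^ r)) →
        ((Fin n → ZMod (p ^ r)) × ZMod (p ^ r)) → ((Fin n → ZMod (p ^ r)) × ZMod (p ^ r)) :=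
      fun u v => (u.1 + v.1, u.2 + v.2 - b u.1 v.1)
    let mulH' : ((Fin n → ZMod (p ^ r)) × ZMod (p ^ r)) →
        ((Fin n → ZMod (p ^ r)) × ZMod (p ^ r)) → ((Fin n → ZMod (p ^ r)) × ZMod (p ^ r)) :=
      fun u v => (u.1 + (u.2.val • f) v.1, u.2 + v.2)
    let φ : ((Fin n → ZMod (p ^ r)) × ZMod (p ^ r)) →
        ((Fin n → ZMod (p ^ r)) × ZMod (p ^ r)) :=
      fun u => (u.1, u.2 - Q u.1)
    Function.Bijective φ ∧
    (∀ u v, φ (addH u v) = addH' (φ u) (φ v)) ∧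
    (∀ u v, φ (mulH u v) = mulH' (φ u) (φ v)) := by
  intro b addH mulH addH' mulH' φ
  have hQfk : ∀ (k : ℕ) (x), Q ((k • f) x) = Q x := by
    intro k
    induction k with
    | zero => intro x; simp
    | succ k ih =>
      intro x
      rw [succ_nsmul]
      simpa [hQf] using ih (f x)
  refine ⟨⟨?_, ?_⟩, ?_, ?_⟩
  · intro u v h
    simp only [φ, Prod.mk.injEq] at h
    obtain ⟨h1, h2⟩ := h
    rw [h1] at h2
    exact Prod.ext h1 (by linear_combination h2)
  · intro w
    exact ⟨(w.1, w.2 + Q w.1), by simp [φ]⟩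
  · intro u v
    simp only [φ, addH, addH', b]
    refine Prod.ext rfl ?_
    ring
  · intro u v
    simp only [φ, mulH, mulH', b]
    refine Prod.ext rfl ?_
    simp only []
    have := hQfk (u.2 - Q u.1).val v.1
    rw [this]
    ring
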